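/- If θ̂ : ℝ≥0 → ℝ satisfies the gradient estimator ODE θ̂'(t) = γ Δ(t)(𝒴(t) - Δ(t)θ̂(t)) where 𝒴(t) = Δ(t)θ for a constant θ, and w satisfies w'(t) = -γ Δ(t)² w(t) with w(0) = 1, then for all t ≥ 0, (1 - w(t))·θ = θ̂(t) - w(t)·θ̂(0). -/

import Mathlib

theorem ct_gradient_key_relation
    (γ θ : ℝ) (hγ : 0 < γ)
    (Δ θh w : ℝ → ℝ)
    (hΔ : Continuous Δ)
    (hode : ∀ t, 0 ≤ t → HasDerivAt θh (γ * Δ t * (Δ t * θ - Δ t * θh t)) t)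
    (hw : ∀ t, 0 ≤ t → HasDerivAt w (-γ * (Δ t) ^ 2 * w t) t)
    (hw0 : w 0 = 1) :
    ∀ t, 0 ≤ t → (1 - w t) * θ = θh t - w t * θh 0 := by
  set E : ℝ → ℝ := fun t => Real.exp (∫ s in (0:ℝ)..t, γ * Δ s ^ 2) with hEdef
  have hcont : Continuous fun s => γ * Δ s ^ 2 := by continuity
  have hE : ∀ t : ℝ, HasDerivAt E (γ * Δ t ^ 2 * E t) t := by
    intro t
    have hI : HasDerivAt (fun u => ∫ s in (0:ℝ)..u, γ * Δ s ^ 2) (γ * Δ t ^ 2) t :=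
      intervalIntegral.integral_hasDerivAt_right
        (hcont.intervalIntegrable _ _)
        (hcont.stronglyMeasurableAtFilter _ _)
        hcont.continuousAt
    simpa [hEdef, mul_comm] using hI.exp
  have hE0 : E 0 = 1 := by simp [hEdef]
  have hEpos : ∀ t, 0 < E t := fun t => Real.exp_pos _
  -- f = (θh - θ) * E and g = w * E have zero derivative on [0, ∞)
  have hf : ∀ t, 0 ≤ t → HasDerivAt (fun s => (θh s - θ) * E s) 0 t := by
    intro t ht
    have := (((hode t ht).sub_const θ).mul (hE t))
    refine this.congr_deriv ?_
    ring
  have hg : ∀ t, 0 ≤ t → HasDerivAt (fun s => w s * E s) 0 t := by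
    intro t ht
    have := ((hw t ht).mul (hE t))
    refine this.congr_deriv ?_
    ring
  have key : ∀ (F : ℝ → ℝ), (∀ s, 0 ≤ s → HasDerivAt F 0 s) →
      ∀ t, 0 ≤ t → F t = F 0 := by
    intro F hF t ht
    have hcontF : ContinuousOn F (Set.Icc 0 t) := fun x hx =>
      ((hF x hx.1).continuousAt).continuousWithinAt
    have hderiv : ∀ x ∈ Set.Ico (0:ℝ) t, HasDerivWithinAt F 0 (Set.Ici x) x :=
      fun x hx => (hF x hx.1).hasDerivWithinAt
    exact constant_of_has_deriv_right_zero hcontF hderiv t (Set.mem_Icc.2 ⟨ht, le_refl t⟩)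
  intro t ht
  have h1 : (θh t - θ) * E t = θh 0 - θ := by
    have := key _ hf t ht
    simpa [hE0] using this
  have h2 : w t * E t = 1 := by
    have := key _ hg t ht
    simpa [hE0, hw0] using this
  have hEne : E t ≠ 0 := (hEpos t).ne'
  have hwt : w t = (E t)⁻¹ := by field_simp at h2 ⊢; linarith
  have hθh : θh t = θ + (θh 0 - θ) * (E t)⁻¹ := by
    field_simp at h1 ⊢; linarith
  rw [hwt, hθh]
  field_simp
  ring
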